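/- If x, y, z, w are symmetric 2×2 matrices over a commutative ring with trace(J·x·J·z·J·y) = 0, then trace(J·w·J·[x,y,z]·J·y) = det(y)·trace(J·w·J·x·J·z), where [x,y,z] = -x·J·z·J·y. Equivalently, in coordinate form, det(w, y, [x,y,z]) = det(y)·det(w, z, x). -/
import Mathlib


open Matrix

def Jmat (A : Type*) [CommRing A] : Matrix (Fin 2) (Fin 2) A := !![0, 1; -1, 0]

set_option maxHeartbeats 2000000 in
theorem trace_bracket_identity {A : Type*} [CommRing A]
    (x y z w : Matrix (Fin 2) (Fin 2) A)
    (hx : x.IsSymm) (hy : y.IsSymm) (hz : z.IsSymm) (hw : w.IsSymm)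
    (htr : (Jmat A * x * Jmat A * z * Jmat A * y).trace = 0) :
    (Jmat A * w * Jmat A * (-(x * Jmat A * z * Jmat A * y)) * Jmat A * y).trace =
      y.det * (Jmat A * w * Jmat A * x * Jmat A * z).trace := by
  have hx' : x 1 0 = x 0 1 := congrFun (congrFun hx.symm 1) 0
  have hy' : y 1 0 = y 0 1 := congrFun (congrFun hy.symm 1) 0
  have hz' : z 1 0 = z 0 1 := congrFun (congrFun hz.symm 1) 0
  have hw' : w 1 0 = w 0 1 := congrFun (congrFun hw.symm 1) 0
  rw [Matrix.eta_fin_two x, Matrix.eta_fin_two y, Matrix.eta_fin_two z,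
    Matrix.eta_fin_two w, hx', hy', hz', hw']
  simp only [Jmat, Matrix.neg_mul, Matrix.mul_neg, Matrix.trace_neg, Matrix.mul_fin_two, Matrix.trace_fin_two_of, Matrix.det_fin_two_of,
    Matrix.neg_apply, Matrix.cons_val', Matrix.cons_val_zero, Matrix.cons_val_one,
    Matrix.head_cons, Matrix.empty_val', Matrix.cons_val_fin_one, Matrix.head_fin_const]
  ring
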